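/- Let b and c be integers, let G be the symmetric 3×3 integer matrix with rows (3,4,0), (4,10,b), (0,b,c), let g = gcd(b,14), and let w = (4b/g, −3b/g, 14/g) ∈ ℤ³. Then the set of vectors v ∈ ℤ³ with ⟨v,e₀⟩_G = 0 and ⟨v,e₁⟩_G = 0 is exactly the set of integer multiples of w, and ⟨w,w⟩_G = 14(14c − 3b²)/g². -/

import Mathlib

open Matrix

/-- The orthogonal complement of the sublattice spanned by `e₀, e₁` in the rank 3
lattice with Gram matrix `(3,4,0;4,10,b;0,b,c)` is generated by
`w = (4b/g, −3b/g, 14/g)` with `g = gcd(b,14)`, and `⟨w,w⟩ = 14(14c − 3b²)/g²`. -/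
theorem stmt6 (b c : ℤ) :
    let G : Matrix (Fin 3) (Fin 3) ℤ := !![3, 4, 0; 4, 10, b; 0, b, c]
    let g : ℤ := Int.gcd b 14
    let w : Fin 3 → ℤ := ![4 * b / g, -(3 * b) / g, 14 / g]
    (∀ v : Fin 3 → ℤ,
      (v ⬝ᵥ G.mulVec ![1, 0, 0] = 0 ∧ v ⬝ᵥ G.mulVec ![0, 1, 0] = 0) ↔
        ∃ k : ℤ, v = k • w) ∧
    w ⬝ᵥ G.mulVec w = 14 * (14 * c - 3 * b ^ 2) / g ^ 2 := by
  intro G g w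
  have hgb : g ∣ b := Int.gcd_dvd_left b 14
  have hg14 : g ∣ (14:ℤ) := Int.gcd_dvd_right b 14
  have hgpos : 0 < Int.gcd b 14 := by
    have : (14:ℤ) ≠ 0 := by norm_num
    exact Int.gcd_pos_of_ne_zero_right b this
  have hg0 : g ≠ 0 := by simp only [g]; exact_mod_cast hgpos.ne'
  obtain ⟨b', hb'⟩ := hgb
  obtain ⟨f, hf⟩ := hg14
  have hf0 : f ≠ 0 := by rintro rfl; simp at hf
  have hdiv1 : 4 * b / g = 4 * b' := by rw [hb', mul_left_comm, Int.mul_ediv_cancel_left _ hg0]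
  have hdiv2 : -(3 * b) / g = -(3 * b') := by
    rw [hb', show -(3 * (g * b')) = g * (-(3*b')) by ring, Int.mul_ediv_cancel_left _ hg0]
  have hdiv3 : (14:ℤ) / g = f := by rw [hf, Int.mul_ediv_cancel_left _ hg0]
  have hw : w = ![4 * b', -(3 * b'), f] := by
    simp [w, hdiv1, hdiv2, hdiv3]
  have hco : IsCoprime b' f := by
    rw [Int.isCoprime_iff_gcd_eq_one]
    have hgdef : ((Int.gcd b 14 : ℕ) : ℤ) = g := rfl
    have := Int.gcd_div_gcd_div_gcd (i := b) (j := 14) hgpos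
    rw [hgdef] at this
    rwa [show b / g = b' by rw [hb', Int.mul_ediv_cancel_left _ hg0],
      show (14:ℤ) / g = f by rw [hf, Int.mul_ediv_cancel_left _ hg0]] at this
  have hf3 : IsCoprime f (3:ℤ) := by
    have h14 : IsCoprime (14:ℤ) 3 := by norm_num
    exact IsCoprime.of_isCoprime_of_dvd_left h14 ⟨g, by linarith [hf]⟩
  clear_value g
  constructor
  · intro v
    constructor
    · rintro ⟨h1, h2⟩
      simp [G, Matrix.mulVec, dotProduct, Fin.sum_univ_three] at h1 h2
      have key : f * v 1 = -(3 * b') * v 2 := by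
        have h3 : g * (f * v 1) = g * (-(3 * b') * v 2) := by
          linear_combination 3 * h2 - 4 * h1 - v 1 * hf - 3 * v 2 * hb'
        exact mul_left_cancel₀ hg0 h3
      have hdvd : f ∣ 3 * b' * v 2 := ⟨-v 1, by linarith [key]⟩
      have hfv2 : f ∣ v 2 := (hf3.mul_right hco.symm).dvd_of_dvd_mul_left hdvd
      obtain ⟨k, hk⟩ := hfv2
      have hv1 : v 1 = -(3 * b') * k := by
        have : f * v 1 = f * (-(3 * b') * k) := by rw [key, hk]; ring
        exact mul_left_cancel₀ hf0 this
      have hv0 : v 0 = 4 * b' * k := by linarith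
      refine ⟨k, ?_⟩
      rw [hw]
      funext i
      fin_cases i <;> simp [hv0, hv1, hk] <;> ring
    · rintro ⟨k, rfl⟩
      rw [hw]
      constructor <;>
        · simp [G, Matrix.mulVec, dotProduct, Fin.sum_univ_three]
          first
          | ring1
          | linear_combination (-(k * b')) * hf + (k * f) * hb'
  · rw [hw]
    have hR : 14 * (14 * c - 3 * b ^ 2) = f * (c * f - 3 * g * b' ^ 2) * g ^ 2 := by
      rw [hf, hb']; ring
    simp [G, Matrix.mulVec, dotProduct, Fin.sum_univ_three]
    rw [hR, Int.mul_ediv_cancel _ (pow_ne_zero 2 hg0)]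
    linear_combination (3 * b' ^ 2) * hf - 6 * b' * f * hb'
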